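/- For every real ξ, log(1 + |ξ|) = ∫_ℝ (1 - cos(ξ y)) j(y) dy, where j(y) = π^{-1} ∫₀^∞ e^{-s} (s² + y²)^{-1} ds. -/

import Mathlib

open MeasureTheory Real Set Filter Complex FourierTransform


lemma integral_exp_neg_mul_cos (b : ℝ) :
    ∫ x in Ioi (0:ℝ), Real.exp (-x) * Real.cos (b * x) = 1 / (1 + b ^ 2) := by
  have h1b : (0:ℝ) < 1 + b ^ 2 := by positivity
  set F : ℝ → ℝ := fun x => Real.exp (-x) * (b * Real.sin (b*x) - Real.cos (b*x)) / (1 + b^2)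
    with hF
  have hderiv : ∀ x ∈ Ici (0:ℝ), HasDerivAt F (Real.exp (-x) * Real.cos (b*x)) x := by
    intro x _
    have h1 : HasDerivAt (fun x : ℝ => Real.exp (-x)) (-Real.exp (-x)) x := by
      simpa using ((hasDerivAt_neg x).exp)
    have h2 : HasDerivAt (fun x : ℝ => b * Real.sin (b*x) - Real.cos (b*x))
        (b * (Real.cos (b*x) * b) - (-Real.sin (b*x) * b)) x := by
      have hs : HasDerivAt (fun x : ℝ => Real.sin (b*x)) (Real.cos (b*x) * b) x := by
        simpa [Function.comp_def] using (Real.hasDerivAt_sin (b*x)).comp x ((hasDerivAt_id x).const_mul b)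
      have hc : HasDerivAt (fun x : ℝ => Real.cos (b*x)) (-Real.sin (b*x) * b) x := by
        simpa [Function.comp_def] using (Real.hasDerivAt_cos (b*x)).comp x ((hasDerivAt_id x).const_mul b)
      exact (hs.const_mul b).sub hc
    have := (h1.mul h2).div_const (1 + b^2)
    refine this.congr_deriv ?_
    field_simp
    ring
  have htend : Tendsto F atTop (nhds 0) := by
    have hb : ∀ x : ℝ, |F x| ≤ Real.exp (-x) * (|b| + 1) / (1 + b^2) := by
      intro x
      rw [hF]
      simp only [abs_div, abs_of_pos h1b]
      gcongr
      rw [abs_mul, abs_of_pos (Real.exp_pos _)]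
      gcongr
      calc |b * Real.sin (b*x) - Real.cos (b*x)| ≤ |b * Real.sin (b*x)| + |Real.cos (b*x)| :=
            abs_sub _ _
        _ ≤ |b| * 1 + 1 := by
            rw [abs_mul]
            gcongr
            · exact Real.abs_sin_le_one _
            · exact Real.abs_cos_le_one _
        _ = |b| + 1 := by ring
    have h0 : Tendsto (fun x : ℝ => Real.exp (-x) * (|b| + 1) / (1 + b^2)) atTop (nhds 0) := by
      have := (Real.tendsto_exp_neg_atTop_nhds_zero)
      simpa using ((this.mul_const (|b|+1)).div_const (1 + b^2))
    refine squeeze_zero_norm (fun x => ?_) h0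
    simpa using hb x
  have hint : IntegrableOn (fun x => Real.exp (-x) * Real.cos (b*x)) (Ioi (0:ℝ)) := by
    have hg : IntegrableOn (fun x => Real.exp (-x)) (Ioi (0:ℝ)) := by
      simpa using exp_neg_integrableOn_Ioi (0:ℝ) one_pos
    refine Integrable.mono' (g := fun x => Real.exp (-x)) hg ?_ ?_
    · exact (Continuous.mul (by continuity) (by continuity)).aestronglyMeasurable
    · filter_upwards with x
      rw [norm_mul, norm_of_nonneg (Real.exp_pos _).le]
      calc Real.exp (-x) * ‖Real.cos (b*x)‖ ≤ Real.exp (-x) * 1 := by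
            gcongr; exact Real.abs_cos_le_one _
        _ = Real.exp (-x) := mul_one _
  have := integral_Ioi_of_hasDerivAt_of_tendsto' hderiv hint htend
  rw [this, hF]
  simp
  ring

lemma integrable_exp_neg_abs : Integrable (fun x : ℝ => Real.exp (-|x|)) := by
  rw [← integrableOn_univ, ← Iic_union_Ioi (a := (0:ℝ))]
  refine IntegrableOn.union ?_ ?_
  · refine (integrableOn_exp_Iic 0).congr_fun (fun x hx => ?_) measurableSet_Iic
    rw [abs_of_nonpos hx, neg_neg]
  · refine (exp_neg_integrableOn_Ioi (0:ℝ) one_pos).congr_fun (fun x hx => ?_) measurableSet_Ioi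
    rw [_root_.abs_of_pos hx]
    ring_nf

lemma integral_cos_mul_exp_neg_abs (c : ℝ) :
    ∫ x : ℝ, Real.cos (c * x) * Real.exp (-|x|) = 2 / (1 + c ^ 2) := by
  have heq : (∫ x : ℝ, Real.cos (c * x) * Real.exp (-|x|))
      = ∫ x : ℝ, (fun t => Real.exp (-t) * Real.cos (c * t)) |x| := by
    congr 1
    funext x
    rcases le_or_gt 0 x with hx | hx
    · rw [_root_.abs_of_nonneg hx, mul_comm]
    · rw [abs_of_neg hx]
      simp only [mul_neg, Real.cos_neg, neg_neg, mul_comm]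
  rw [heq, integral_comp_abs (f := fun t => Real.exp (-t) * Real.cos (c * t)), integral_exp_neg_mul_cos c]
  ring


lemma integrable_cos_mul (g : ℝ → ℝ) (hg : Integrable g) (c : ℝ) :
    Integrable (fun x : ℝ => Real.cos (c * x) * g x) := by
  refine hg.norm.mono' (((Real.continuous_cos.comp (continuous_const.mul continuous_id))
    ).aestronglyMeasurable.mul hg.1) ?_
  filter_upwards with x
  rw [norm_mul]
  calc ‖Real.cos (c*x)‖ * ‖g x‖ ≤ 1 * ‖g x‖ := by
        gcongr; exact Real.abs_cos_le_one _
    _ = ‖g x‖ := one_mul _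

lemma integrable_sin_mul (g : ℝ → ℝ) (hg : Integrable g) (c : ℝ) :
    Integrable (fun x : ℝ => Real.sin (c * x) * g x) := by
  refine hg.norm.mono' (((Real.continuous_sin.comp (continuous_const.mul continuous_id))
    ).aestronglyMeasurable.mul hg.1) ?_
  filter_upwards with x
  rw [norm_mul]
  calc ‖Real.sin (c*x)‖ * ‖g x‖ ≤ 1 * ‖g x‖ := by
        gcongr; exact Real.abs_sin_le_one _
    _ = ‖g x‖ := one_mul _

/-- Fourier transform of an even real function. -/
lemma fourier_even_real (g : ℝ → ℝ) (hg : Integrable g) (heven : ∀ x, g (-x) = g x) (w : ℝ) :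
    𝓕 (fun x : ℝ => (g x : ℂ)) w = ((∫ v : ℝ, Real.cos (2*π*w*v) * g v : ℝ) : ℂ) := by
  rw [Real.fourier_real_eq_integral_exp_smul]
  have key : ∀ v : ℝ, Complex.exp (↑(-2 * π * v * w) * Complex.I) • (g v : ℂ)
      = ((Real.cos (2*π*w * v) * g v : ℝ) : ℂ)
        + (((- (Real.sin (2*π*w * v) * g v) : ℝ)) : ℂ) * Complex.I := by
    intro v
    have h1 : Real.cos (-2 * π * v * w) = Real.cos (2*π*w*v) := by
      rw [show (-2) * π * v * w = -(2*π*w*v) by ring, Real.cos_neg]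
    have h2 : Real.sin (-2 * π * v * w) = - Real.sin (2*π*w*v) := by
      rw [show (-2) * π * v * w = -(2*π*w*v) by ring, Real.sin_neg]
    rw [smul_eq_mul, Complex.exp_mul_I, ← Complex.ofReal_cos, ← Complex.ofReal_sin, h1, h2]
    push_cast
    ring
  simp_rw [key]
  have hcos := Complex.ofRealCLM.integral_comp_comm (integrable_cos_mul g hg (2*π*w))
  have hsinR : Integrable (fun x : ℝ => -(Real.sin (2*π*w*x) * g x)) :=
    (integrable_sin_mul g hg (2*π*w)).neg
  have hsin := Complex.ofRealCLM.integral_comp_comm hsinR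
  rw [integral_add, integral_mul_const]
  · simp only [Complex.ofRealCLM_apply, Pi.neg_apply] at hcos hsin
    rw [hcos, hsin]
    have hzero : ∫ x : ℝ, Real.sin (2*π*w*x) * g x = 0 := by
      have h := integral_neg_eq_self (fun x : ℝ => Real.sin (2*π*w*x) * g x) volume
      simp only [mul_neg, Real.sin_neg, neg_mul] at h
      rw [integral_neg] at h
      simp only [heven] at h
      linarith
    have : ∫ x : ℝ, -(Real.sin (2*π*w*x) * g x) = 0 := by rw [integral_neg, hzero]; ring
    rw [this]
    push_cast
    ring
  · exact (Complex.ofRealCLM.integrable_comp (integrable_cos_mul g hg (2*π*w)))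
  · exact ((Complex.ofRealCLM.integrable_comp hsinR).mul_const Complex.I)

lemma fourier_exp_neg_abs (w : ℝ) :
    𝓕 (fun x : ℝ => (Real.exp (-|x|) : ℂ)) w = ((2 / (1 + (2*π*w) ^ 2) : ℝ) : ℂ) := by
  rw [fourier_even_real _ integrable_exp_neg_abs (fun x => by rw [abs_neg]),
    integral_cos_mul_exp_neg_abs]

lemma integrable_two_div_one_add_sq :
    Integrable (fun w : ℝ => 2 / (1 + (2*π*w) ^ 2)) := by
  have h : Integrable (fun x : ℝ => (1 + x ^ 2)⁻¹) := integrable_inv_one_add_sq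
  have := (h.comp_mul_left' (R := 2*π) (by positivity)).const_mul 2
  simpa [div_eq_mul_inv] using this

/-- Fourier transform of the Cauchy kernel: `∫ cos (x y) / (1 + y²) dy = π e^{-|x|}`. -/
lemma integral_cos_div_one_add_sq (x : ℝ) :
    ∫ y : ℝ, Real.cos (x * y) / (1 + y ^ 2) = π * Real.exp (-|x|) := by
  set f : ℝ → ℂ := fun x => (Real.exp (-|x|) : ℂ) with hf
  have hcont : Continuous f := Complex.continuous_ofReal.comp
    (Real.continuous_exp.comp continuous_abs.neg)
  have hint : Integrable f := Complex.ofRealCLM.integrable_comp integrable_exp_neg_abs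
  have hFf : 𝓕 f = fun w : ℝ => ((2 / (1 + (2*π*w) ^ 2) : ℝ) : ℂ) :=
    funext fourier_exp_neg_abs
  have hFint : Integrable (𝓕 f) := by
    rw [hFf]
    exact Complex.ofRealCLM.integrable_comp integrable_two_div_one_add_sq
  have hinv := Continuous.fourierInv_fourier_eq hcont hint hFint
  have h1 : 𝓕 (𝓕 f) (-x) = f x := by
    rw [← Real.fourierInv_eq_fourier_neg]
    rw [hinv]
  rw [hFf, fourier_even_real _ integrable_two_div_one_add_sq
    (fun v => by rw [mul_neg, neg_sq]), hf] at h1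
  rw [Complex.ofReal_inj] at h1
  -- h1 : ∫ v, cos (2π(-x) v) * (2/(1+(2πv)²)) = exp (-|x|)
  have h2 : (∫ v : ℝ, Real.cos (2*π*(-x)*v) * (2 / (1 + (2*π*v) ^ 2)))
      = ∫ v : ℝ, (fun y => Real.cos (x*y) * (2 / (1 + y ^ 2))) (2*π*v) := by
    congr 1
    funext v
    simp only
    rw [show 2*π*(-x)*v = -(x*(2*π*v)) by ring, Real.cos_neg]
  rw [h2, MeasureTheory.Measure.integral_comp_mul_left
      (fun y => Real.cos (x*y) * (2 / (1 + y ^ 2))) (2*π)] at h1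
  rw [smul_eq_mul] at h1
  have hπ : (0:ℝ) < 2*π := by positivity
  have h3 : ∫ y : ℝ, Real.cos (x*y) * (2 / (1 + y ^ 2)) = 2*π * Real.exp (-|x|) := by
    rw [abs_inv, abs_of_pos hπ] at h1
    field_simp at h1 ⊢
    linarith
  have h4 : (∫ y : ℝ, Real.cos (x*y) / (1 + y ^ 2))
      = (∫ y : ℝ, Real.cos (x*y) * (2 / (1 + y ^ 2))) / 2 := by
    rw [← integral_div]
    congr 1
    funext y
    ring
  rw [h4, h3]
  ring


lemma integral_cos_mul_inv_sq_add_sq {s : ℝ} (hs : 0 < s) (t : ℝ) :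
    ∫ y : ℝ, Real.cos (t * y) * (s ^ 2 + y ^ 2)⁻¹ = π / s * Real.exp (-(s * |t|)) := by
  have h := MeasureTheory.Measure.integral_comp_mul_left
    (fun y => Real.cos (t * y) * (s ^ 2 + y ^ 2)⁻¹) s
  have h1 : (∫ u : ℝ, Real.cos (t * (s * u)) * (s ^ 2 + (s * u) ^ 2)⁻¹)
      = s⁻¹ * s⁻¹ * (π * Real.exp (-|t * s|)) := by
    have heq : ∀ u : ℝ, Real.cos (t * (s * u)) * (s ^ 2 + (s * u) ^ 2)⁻¹
        = s⁻¹ * s⁻¹ * (Real.cos ((t * s) * u) / (1 + u ^ 2)) := by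
      intro u
      rw [show t * (s * u) = (t * s) * u by ring]
      rw [div_eq_mul_inv]
      rw [show s ^ 2 + (s * u) ^ 2 = s ^ 2 * (1 + u ^ 2) by ring, mul_inv]
      have h2 : (s ^ 2)⁻¹ = s⁻¹ * s⁻¹ := by rw [sq, mul_inv]
      rw [h2]
      ring
    simp_rw [heq]
    rw [integral_const_mul, integral_cos_div_one_add_sq]
  rw [h1, smul_eq_mul, abs_inv, abs_of_pos hs] at h
  have hs' : s ≠ 0 := ne_of_gt hs
  have habs : |t * s| = s * |t| := by rw [abs_mul, abs_of_pos hs]; ring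
  rw [habs] at h
  field_simp at h ⊢
  linear_combination -h

lemma integrable_inv_sq_add_sq {s : ℝ} (hs : 0 < s) :
    Integrable (fun y : ℝ => (s ^ 2 + y ^ 2)⁻¹) := by
  have h : Integrable (fun x : ℝ => (1 + x ^ 2)⁻¹) := integrable_inv_one_add_sq
  have h2 := (h.comp_div (ne_of_gt hs)).const_mul (s⁻¹ * s⁻¹)
  refine h2.congr ?_
  filter_upwards with y
  have hs' : s ≠ 0 := ne_of_gt hs
  rw [show s⁻¹ * s⁻¹ * (1 + (y / s) ^ 2)⁻¹ = ((s * s) * (1 + (y / s) ^ 2))⁻¹ by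
    rw [mul_inv, mul_inv]]
  congr 1
  field_simp

lemma integral_inv_sq_add_sq' {s : ℝ} (hs : 0 < s) :
    ∫ y : ℝ, (s ^ 2 + y ^ 2)⁻¹ = π / s := by
  have := integral_cos_mul_inv_sq_add_sq hs 0
  simpa using this



lemma exp_decay_integral_Ioc {a s : ℝ} (ha : 0 < a) (hs : 0 < s) :
    ∫ t in Ioc (0:ℝ) a, Real.exp (-((1+t)*s)) = Real.exp (-s) * (1 - Real.exp (-(a * s))) / s := by
  rw [← intervalIntegral.integral_of_le ha.le]
  have hderiv : ∀ t ∈ uIcc (0:ℝ) a, HasDerivAt (fun t => -Real.exp (-((1+t)*s)) / s)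
      (Real.exp (-((1+t)*s))) t := by
    intro t _
    have h1 : HasDerivAt (fun t : ℝ => -((1+t)*s)) (-s) t := by
      have : HasDerivAt (fun t : ℝ => (1+t)*s) s t := by
        simpa using ((hasDerivAt_id t).const_add 1).mul_const s
      simpa [Pi.neg_def] using this.neg
    have h2 := (h1.exp).neg.div_const s
    refine h2.congr_deriv ?_
    field_simp
  have hint : IntervalIntegrable (fun t => Real.exp (-((1+t)*s))) volume 0 a :=
    (Real.continuous_exp.comp (by continuity)).intervalIntegrable 0 a
  rw [intervalIntegral.integral_eq_sub_of_hasDerivAt hderiv hint]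
  rw [show -((1+a)*s) = -s + -(a*s) by ring, Real.exp_add]
  field_simp
  ring

lemma integral_exp_neg_mul_Ioi {c : ℝ} (hc : 0 < c) :
    ∫ s in Ioi (0:ℝ), Real.exp (-(c * s)) = c⁻¹ := by
  have hderiv : ∀ s ∈ Ici (0:ℝ), HasDerivAt (fun s => -Real.exp (-(c*s)) / c)
      (Real.exp (-(c*s))) s := by
    intro s _
    have h1 : HasDerivAt (fun s : ℝ => -(c*s)) (-c) s := by
      simpa [Pi.neg_def] using ((hasDerivAt_id s).const_mul c).neg
    have h2 := (h1.exp).neg.div_const c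
    refine h2.congr_deriv ?_
    field_simp
  have hint : IntegrableOn (fun s => Real.exp (-(c*s))) (Ioi (0:ℝ)) := by
    have := exp_neg_integrableOn_Ioi (0:ℝ) hc
    refine this.congr_fun (fun x _ => by ring_nf) measurableSet_Ioi
  have htend' : Tendsto (fun s => -Real.exp (-(c*s)) / c) atTop (nhds 0) := by
    have h1 : Tendsto (fun s : ℝ => c * s) atTop atTop :=
      (tendsto_id.const_mul_atTop hc)
    have h2 : Tendsto (fun s : ℝ => Real.exp (-(c*s))) atTop (nhds 0) := by
      exact Real.tendsto_exp_neg_atTop_nhds_zero.comp h1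
    simpa using (h2.neg.div_const c)
  have := integral_Ioi_of_hasDerivAt_of_tendsto' hderiv hint htend'
  rw [this]
  simp
  field_simp

lemma integral_inv_one_add_Ioc {a : ℝ} (ha : 0 < a) :
    ∫ t in Ioc (0:ℝ) a, (1 + t)⁻¹ = Real.log (1 + a) := by
  rw [← intervalIntegral.integral_of_le ha.le]
  have hderiv : ∀ t ∈ uIcc (0:ℝ) a, HasDerivAt (fun t => Real.log (1+t)) ((1+t)⁻¹) t := by
    intro t ht
    rw [uIcc_of_le ha.le] at ht
    have h1t : (0:ℝ) < 1 + t := by linarith [ht.1]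
    have h1 : HasDerivAt (fun t : ℝ => 1 + t) 1 t := by
      simpa using (hasDerivAt_id t).const_add 1
    have := (Real.hasDerivAt_log (ne_of_gt h1t)).comp t h1
    simpa [Function.comp_def] using this
  have hint : IntervalIntegrable (fun t => (1+t)⁻¹) volume 0 a := by
    refine ContinuousOn.intervalIntegrable ?_
    refine ContinuousOn.inv₀ (by fun_prop) ?_
    intro t ht
    rw [uIcc_of_le ha.le] at ht
    have : (0:ℝ) < 1 + t := by linarith [ht.1]
    exact ne_of_gt this
  rw [intervalIntegral.integral_eq_sub_of_hasDerivAt hderiv hint]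
  simp

lemma frullani_aux {a : ℝ} (ha : 0 < a) :
    ∫ s in Ioi (0:ℝ), Real.exp (-s) * (1 - Real.exp (-(a * s))) / s = Real.log (1 + a) := by
  set μ := volume.restrict (Ioi (0:ℝ)) with hμ
  set ν := volume.restrict (Ioc (0:ℝ) a) with hν
  have hcont : Continuous (fun p : ℝ × ℝ => Real.exp (-((1+p.2)*p.1))) := by continuity
  have hmeas : AEStronglyMeasurable (fun p : ℝ × ℝ => Real.exp (-((1+p.2)*p.1))) (μ.prod ν) :=
    hcont.aestronglyMeasurable
  have hInt : Integrable (fun p : ℝ × ℝ => Real.exp (-((1+p.2)*p.1))) (μ.prod ν) := by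
    rw [integrable_prod_iff hmeas]
    constructor
    · filter_upwards with s
      exact (Real.continuous_exp.comp (by continuity)).integrableOn_Ioc
    · have hb : ∀ᵐ s ∂μ, ‖∫ t, ‖Real.exp (-((1+t)*s))‖ ∂ν‖ ≤ a * Real.exp (-s) := by
        rw [hμ, ae_restrict_iff' measurableSet_Ioi]
        filter_upwards with s hs
        have key : (∫ t, ‖Real.exp (-((1+t)*s))‖ ∂ν) ≤ a * Real.exp (-s) := by
          have h1 : (∫ t, ‖Real.exp (-((1+t)*s))‖ ∂ν) ≤ ∫ t in Ioc (0:ℝ) a, Real.exp (-s) := by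
            rw [hν]
            refine setIntegral_mono_on ?_ ?_ measurableSet_Ioc ?_
            · exact ((Real.continuous_exp.comp (by continuity)).norm).integrableOn_Ioc
            · exact (continuous_const (y := Real.exp (-s))).integrableOn_Ioc
            · intro t ht
              rw [norm_of_nonneg (Real.exp_pos _).le]
              apply Real.exp_le_exp.2
              nlinarith [ht.1, le_of_lt (show (0:ℝ) < s from hs)]
          have h2 : (∫ t in Ioc (0:ℝ) a, Real.exp (-s)) = a * Real.exp (-s) := by
            rw [setIntegral_const]
            simp [Real.volume_Ioc, ha.le]
          calc _ ≤ _ := h1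
            _ = _ := h2
        rw [norm_of_nonneg (integral_nonneg (fun t => norm_nonneg _))]
        exact key
      refine Integrable.mono' ?_ ?_ hb
      · have : Integrable (fun s => Real.exp (-s)) μ := by
          rw [hμ]; simpa [IntegrableOn] using exp_neg_integrableOn_Ioi (0:ℝ) one_pos
        exact this.const_mul a
      · exact (hmeas.norm.integral_prod_right')
  have hswap := integral_integral_swap (f := fun s t => Real.exp (-((1+t)*s))) hInt
  calc ∫ s in Ioi (0:ℝ), Real.exp (-s) * (1 - Real.exp (-(a * s))) / s
      = ∫ s in Ioi (0:ℝ), (∫ t in Ioc (0:ℝ) a, Real.exp (-((1+t)*s))) := by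
        refine setIntegral_congr_fun measurableSet_Ioi (fun s hs => ?_)
        rw [exp_decay_integral_Ioc ha hs]
    _ = ∫ t in Ioc (0:ℝ) a, (∫ s in Ioi (0:ℝ), Real.exp (-((1+t)*s))) := hswap
    _ = ∫ t in Ioc (0:ℝ) a, (1+t)⁻¹ := by
        refine setIntegral_congr_fun measurableSet_Ioc (fun t ht => ?_)
        exact integral_exp_neg_mul_Ioi (by linarith [ht.1])
    _ = Real.log (1 + a) := integral_inv_one_add_Ioc ha


lemma integrable_one_sub_cos_mul_inv_sq_add_sq {s : ℝ} (hs : 0 < s) (ξ : ℝ) :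
    Integrable (fun y : ℝ => (1 - Real.cos (ξ * y)) * (Real.exp (-s) * (s ^ 2 + y ^ 2)⁻¹)) := by
  have h1 := ((integrable_inv_sq_add_sq hs).const_mul (Real.exp (-s)))
  have h2 := (integrable_cos_mul _ h1 ξ)
  refine (h1.sub h2).congr ?_
  filter_upwards with y
  simp only [Pi.sub_apply]
  ring

lemma inner_y_integral {s : ℝ} (hs : 0 < s) (ξ : ℝ) :
    ∫ y : ℝ, (1 - Real.cos (ξ * y)) * (Real.exp (-s) * (s ^ 2 + y ^ 2)⁻¹)
      = π * (Real.exp (-s) * (1 - Real.exp (-(|ξ| * s))) / s) := by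
  have heq : ∀ y : ℝ, (1 - Real.cos (ξ * y)) * (Real.exp (-s) * (s ^ 2 + y ^ 2)⁻¹)
      = Real.exp (-s) * ((s ^ 2 + y ^ 2)⁻¹ - Real.cos (ξ * y) * (s ^ 2 + y ^ 2)⁻¹) := by
    intro y; ring
  simp_rw [heq]
  rw [integral_const_mul, integral_sub (integrable_inv_sq_add_sq hs)
    (integrable_cos_mul _ (integrable_inv_sq_add_sq hs) ξ),
    integral_inv_sq_add_sq' hs, integral_cos_mul_inv_sq_add_sq hs ξ]
  rw [show s * |ξ| = |ξ| * s by ring]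
  field_simp

theorem geometric_one_stable_levy_khintchine (ξ : ℝ) :
    Real.log (1 + |ξ|) =
      ∫ y : ℝ, (1 - Real.cos (ξ * y)) *
        (π⁻¹ * ∫ s in Set.Ioi (0 : ℝ), Real.exp (-s) * (s ^ 2 + y ^ 2)⁻¹) := by
  rcases eq_or_ne ξ 0 with rfl | hξ
  · simp
  have ha : 0 < |ξ| := abs_pos.mpr hξ
  set K : ℝ → ℝ → ℝ :=
    fun s y => (1 - Real.cos (ξ * y)) * (Real.exp (-s) * (s ^ 2 + y ^ 2)⁻¹) with hK
  set μ := volume.restrict (Ioi (0:ℝ)) with hμ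
  -- nonnegativity
  have hKnonneg : ∀ s y : ℝ, 0 ≤ K s y := by
    intro s y
    apply mul_nonneg
    · have := Real.cos_le_one (ξ * y); linarith
    · positivity
  -- measurability on the product
  have hmeas : AEStronglyMeasurable (fun p : ℝ × ℝ => K p.1 p.2) (μ.prod volume) := by
    apply Measurable.aestronglyMeasurable
    apply Measurable.mul
    · exact (continuous_const.sub (Real.continuous_cos.comp
        (continuous_const.mul continuous_snd))).measurable
    · exact ((Real.continuous_exp.comp continuous_fst.neg).measurable).mul
        (((continuous_fst.pow 2).add (continuous_snd.pow 2)).measurable.inv)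
  -- integrability on the product
  have hInt : Integrable (fun p : ℝ × ℝ => K p.1 p.2) (μ.prod volume) := by
    rw [integrable_prod_iff hmeas]
    constructor
    · rw [hμ, ae_restrict_iff' measurableSet_Ioi]
      filter_upwards with s hs
      exact integrable_one_sub_cos_mul_inv_sq_add_sq hs ξ
    · have hb : ∀ᵐ s ∂μ, ‖∫ y, ‖K s y‖‖ ≤ π * |ξ| * Real.exp (-s) := by
        rw [hμ, ae_restrict_iff' measurableSet_Ioi]
        filter_upwards with s hs
        have hnorm : ∀ y, ‖K s y‖ = K s y := fun y => norm_of_nonneg (hKnonneg s y)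
        simp_rw [hnorm]
        rw [norm_of_nonneg (integral_nonneg (hKnonneg s)), hK]
        rw [inner_y_integral hs ξ]
        have hle : 1 - Real.exp (-(|ξ| * s)) ≤ |ξ| * s := by
          have := Real.add_one_le_exp (-(|ξ| * s))
          linarith
        have hs' : 0 < s := hs
        calc π * (Real.exp (-s) * (1 - Real.exp (-(|ξ| * s))) / s)
            = π * Real.exp (-s) * ((1 - Real.exp (-(|ξ| * s))) / s) := by ring
          _ ≤ π * Real.exp (-s) * |ξ| := by
              have h0 : (0:ℝ) ≤ π * Real.exp (-s) := by positivity
              exact mul_le_mul_of_nonneg_left ((div_le_iff₀ hs').2 (by linarith)) h0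
          _ = π * |ξ| * Real.exp (-s) := by ring
      refine Integrable.mono' ?_ hmeas.norm.integral_prod_right' hb
      have : Integrable (fun s => Real.exp (-s)) μ := by
        rw [hμ]; simpa [IntegrableOn] using exp_neg_integrableOn_Ioi (0:ℝ) one_pos
      exact this.const_mul (π * |ξ|)
  have hswap := integral_integral_swap (f := K) hInt
  -- rewrite the RHS
  have hRHS : (∫ y : ℝ, (1 - Real.cos (ξ * y)) *
        (π⁻¹ * ∫ s in Set.Ioi (0 : ℝ), Real.exp (-s) * (s ^ 2 + y ^ 2)⁻¹))
      = π⁻¹ * ∫ y : ℝ, ∫ s in Ioi (0:ℝ), K s y := by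
    have hpt : ∀ y : ℝ, (1 - Real.cos (ξ * y)) *
        (π⁻¹ * ∫ s in Set.Ioi (0 : ℝ), Real.exp (-s) * (s ^ 2 + y ^ 2)⁻¹)
        = π⁻¹ * ∫ s in Ioi (0:ℝ), K s y := by
      intro y
      calc (1 - Real.cos (ξ * y)) *
            (π⁻¹ * ∫ s in Set.Ioi (0 : ℝ), Real.exp (-s) * (s ^ 2 + y ^ 2)⁻¹)
          = π⁻¹ * ((1 - Real.cos (ξ * y)) *
            ∫ s in Set.Ioi (0 : ℝ), Real.exp (-s) * (s ^ 2 + y ^ 2)⁻¹) := by ring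
        _ = π⁻¹ * ∫ s in Ioi (0:ℝ), K s y := by rw [integral_const_mul]
    simp_rw [hpt]
    rw [integral_const_mul]
  rw [hRHS, ← hswap]
  have hfin : (∫ s in Ioi (0:ℝ), ∫ y : ℝ, K s y)
      = π * Real.log (1 + |ξ|) := by
    have h1 : (∫ s in Ioi (0:ℝ), ∫ y : ℝ, K s y)
        = ∫ s in Ioi (0:ℝ), π * (Real.exp (-s) * (1 - Real.exp (-(|ξ| * s))) / s) := by
      refine setIntegral_congr_fun measurableSet_Ioi (fun s hs => ?_)
      exact inner_y_integral hs ξ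
    rw [h1, integral_const_mul, frullani_aux ha]
  rw [hfin]
  have hπ : (π:ℝ) ≠ 0 := Real.pi_ne_zero
  field_simp
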